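/- Let t ≥ 2 and consider the Ozsváth–Szabó move relation on ℤᵗ for the simple linear graph A_t: a single move replaces a vector c having some coordinate cᵢ = 2 by c + 2·(i-th column of M_t), where M_t is the t×t tridiagonal matrix with −2 on the diagonal and 1 in the entries adjacent to the diagonal (so the move sets cᵢ to −2 and increases each coordinate adjacent to i by 2). If c ∈ {0,2}ᵗ has at least two coordinates equal to 2, then no vector all of whose coordinates lie in {−2, 0} is reachable from c by a finite sequence of such moves. -/
import Mathlib


/-- The matrix `M_t` of the simple linear graph `A_t`: `t × t`, with `−2` on the diagonal,
`1` in positions `(i, i±1)`, and `0` elsewhere. -/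
def Mt (t : ℕ) : Matrix (Fin t) (Fin t) ℤ :=
  Matrix.of fun i j =>
    if i = j then -2 else if (i : ℕ) + 1 = (j : ℕ) ∨ (j : ℕ) + 1 = (i : ℕ) then 1 else 0

/-- The Ozsváth–Szabó move relation on `ℤᵗ`: `c ⇝ c'` if there is an index `i` with
`cᵢ = 2` and `c' = c + 2·(i`-th column of `M_t)`. -/
def OSMove (t : ℕ) (c c' : Fin t → ℤ) : Prop :=
  ∃ i : Fin t, c i = 2 ∧ c' = fun j => c j + 2 * Mt t j i

/-- Some coordinate is at least 3.  Such a coordinate can never fire and can only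
grow, so it stays `≥ 3` forever. -/
def Big (t : ℕ) (c : Fin t → ℤ) : Prop := ∃ k, 3 ≤ c k

/-- All coordinates are `≤ 2`, and there exist `i < j` with `cᵢ = cⱼ = 2` and
all coordinates strictly between them equal to `0`. -/
def Good (t : ℕ) (c : Fin t → ℤ) : Prop :=
  (∀ k, c k ≤ 2) ∧ ∃ i j : Fin t, (i : ℕ) < (j : ℕ) ∧ c i = 2 ∧ c j = 2 ∧
    ∀ k : Fin t, (i : ℕ) < (k : ℕ) → (k : ℕ) < (j : ℕ) → c k = 0

def OSInv (t : ℕ) (c : Fin t → ℤ) : Prop := Big t c ∨ Good t c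

lemma move_val (t : ℕ) (c : Fin t → ℤ) (p k : Fin t) :
    c k + 2 * Mt t k p =
      if (k : ℕ) = (p : ℕ) then c k - 4
      else if (k : ℕ) + 1 = (p : ℕ) ∨ (p : ℕ) + 1 = (k : ℕ) then c k + 2 else c k := by
  simp only [Mt, Matrix.of_apply, Fin.ext_iff]
  split_ifs <;> ring

lemma inv_step {t : ℕ} {c c' : Fin t → ℤ} (h : OSInv t c) (hm : OSMove t c c') :
    OSInv t c' := by
  obtain ⟨p, hp, rfl⟩ := hm
  rcases h with ⟨k, hk⟩ | ⟨hle, i, j, hij, hi2, hj2, hz⟩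
  · -- Big persists
    left
    refine ⟨k, ?_⟩
    show 3 ≤ c k + 2 * Mt t k p
    rw [move_val]
    split_ifs with h1 h2
    · have : k = p := Fin.ext h1
      subst this; omega
    · omega
    · omega
  · -- Good case
    by_cases hb : Big t (fun j => c j + 2 * Mt t j p)
    · exact Or.inl hb
    right
    have hle' : ∀ k, c k + 2 * Mt t k p ≤ 2 := by
      intro k
      by_contra hk
      refine hb ⟨k, ?_⟩
      show 3 ≤ c k + 2 * Mt t k p
      omega
    refine ⟨hle', ?_⟩
    have hcases : (p : ℕ) + 1 < (i : ℕ) ∨ (p : ℕ) + 1 = (i : ℕ) ∨ (p : ℕ) = (i : ℕ) ∨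
        ((i : ℕ) < (p : ℕ) ∧ (p : ℕ) < (j : ℕ)) ∨ (p : ℕ) = (j : ℕ) ∨
        (p : ℕ) = (j : ℕ) + 1 ∨ (j : ℕ) + 1 < (p : ℕ) := by omega
    rcases hcases with hfar | hadj | hpi | hmid | hpj | hadj' | hfar'
    · -- p far to the left: nothing in [i, j] changes
      refine ⟨i, j, hij, ?_, ?_, ?_⟩
      · show c i + 2 * Mt t i p = 2
        rw [move_val]; split_ifs <;> omega
      · show c j + 2 * Mt t j p = 2
        rw [move_val]; split_ifs <;> omega
      · intro k hk1 hk2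
        show c k + 2 * Mt t k p = 0
        have := hz k hk1 hk2
        rw [move_val]; split_ifs <;> omega
    · -- p = i − 1 : cᵢ would become 4, contradiction
      exfalso
      have := hle' i
      rw [move_val] at this
      split_ifs at this <;> omega
    · -- p = i
      by_cases hj1 : (j : ℕ) = (i : ℕ) + 1
      · exfalso
        have := hle' j
        rw [move_val] at this
        split_ifs at this <;> omega
      · have hij' : (i : ℕ) + 1 < (j : ℕ) := by omega
        have hi1t : (i : ℕ) + 1 < t := lt_trans hij' j.isLt
        set i1 : Fin t := ⟨(i : ℕ) + 1, hi1t⟩ with hi1def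
        have hi1v : (i1 : ℕ) = (i : ℕ) + 1 := rfl
        have hci1 : c i1 = 0 := hz i1 (by omega) (by omega)
        refine ⟨i1, j, by omega, ?_, ?_, ?_⟩
        · show c i1 + 2 * Mt t i1 p = 2
          rw [move_val]; split_ifs <;> omega
        · show c j + 2 * Mt t j p = 2
          rw [move_val]; split_ifs <;> omega
        · intro k hk1 hk2
          show c k + 2 * Mt t k p = 0
          have := hz k (by omega) (by omega)
          rw [move_val]; split_ifs <;> omega
    · -- i < p < j : then c p = 0 ≠ 2, contradiction
      exfalso
      have := hz p hmid.1 hmid.2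
      omega
    · -- p = j
      by_cases hj1 : (j : ℕ) = (i : ℕ) + 1
      · exfalso
        have := hle' i
        rw [move_val] at this
        split_ifs at this <;> omega
      · have hj1t : (j : ℕ) - 1 < t := lt_of_le_of_lt (Nat.sub_le _ _) j.isLt
        set j1 : Fin t := ⟨(j : ℕ) - 1, hj1t⟩ with hj1def
        have hj1v : (j1 : ℕ) = (j : ℕ) - 1 := rfl
        have hcj1 : c j1 = 0 := hz j1 (by omega) (by omega)
        refine ⟨i, j1, by omega, ?_, ?_, ?_⟩
        · show c i + 2 * Mt t i p = 2
          rw [move_val]; split_ifs <;> omega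
        · show c j1 + 2 * Mt t j1 p = 2
          rw [move_val]; split_ifs <;> omega
        · intro k hk1 hk2
          show c k + 2 * Mt t k p = 0
          have := hz k (by omega) (by omega)
          rw [move_val]; split_ifs <;> omega
    · -- p = j + 1 : cⱼ would become 4
      exfalso
      have := hle' j
      rw [move_val] at this
      split_ifs at this <;> omega
    · -- p far to the right
      refine ⟨i, j, hij, ?_, ?_, ?_⟩
      · show c i + 2 * Mt t i p = 2
        rw [move_val]; split_ifs <;> omega
      · show c j + 2 * Mt t j p = 2
        rw [move_val]; split_ifs <;> omega
      · intro k hk1 hk2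
        show c k + 2 * Mt t k p = 0
        have := hz k hk1 hk2
        rw [move_val]; split_ifs <;> omega

lemma inv_reach {t : ℕ} {c c' : Fin t → ℤ}
    (h : Relation.ReflTransGen (OSMove t) c c') (hc : OSInv t c) : OSInv t c' := by
  induction h with
  | refl => exact hc
  | tail _ hstep ih => exact inv_step ih hstep

lemma good_init {t : ℕ} (c : Fin t → ℤ) (hc : ∀ i, c i = 0 ∨ c i = 2)
    (i j : Fin t) (hij : (i : ℕ) < (j : ℕ)) (hi : c i = 2) (hj : c j = 2) :
    Good t c := by
  classical
  refine ⟨fun k => by rcases hc k with h | h <;> omega, ?_⟩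
  have hex : ∃ n, (i : ℕ) < n ∧ ∃ k : Fin t, (k : ℕ) = n ∧ c k = 2 :=
    ⟨(j : ℕ), hij, j, rfl, hj⟩
  obtain ⟨hlt, k, hk, hk2⟩ := Nat.find_spec hex
  refine ⟨i, k, by omega, hi, hk2, ?_⟩
  intro l hl1 hl2
  rcases hc l with h0 | h2
  · exact h0
  · exact absurd ⟨hl1, l, rfl, h2⟩ (Nat.find_min hex (by omega))

/-- Let `t ≥ 2`. If `c ∈ {0,2}ᵗ` has at least two coordinates equal to `2`, then
no vector all of whose coordinates lie in `{−2, 0}` is reachable from `c` by a finite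
sequence of Ozsváth–Szabó moves. -/
theorem stmt_8 (t : ℕ) (ht : 2 ≤ t) (c : Fin t → ℤ)
    (hc : ∀ i, c i = 0 ∨ c i = 2)
    (htwo : ∃ i j : Fin t, i ≠ j ∧ c i = 2 ∧ c j = 2) :
    ¬ ∃ c' : Fin t → ℤ, Relation.ReflTransGen (OSMove t) c c' ∧
      (∀ i, c' i = -2 ∨ c' i = 0) := by
  rintro ⟨c', hreach, hvals⟩
  obtain ⟨i, j, hne, hi, hj⟩ := htwo
  have hne' : (i : ℕ) ≠ (j : ℕ) := fun h => hne (Fin.ext h)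
  have hgood : Good t c := by
    rcases hne'.lt_or_gt with h | h
    · exact good_init c hc i j h hi hj
    · exact good_init c hc j i h hj hi
  have hinv : OSInv t c' := inv_reach hreach (Or.inr hgood)
  rcases hinv with ⟨k, hk⟩ | ⟨_, i', j', _, hi', _, _⟩
  · rcases hvals k with h | h <;> omega
  · rcases hvals i' with h | h <;> omega
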